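/- For every u ≥ 0, the Dickman function satisfies ρ(u) ≤ 1/Γ(u+1). -/

import Mathlib

open Set intervalIntegral MeasureTheory Filter Topology

lemma dick_intble (ρ : ℝ → ℝ) (hcont : ContinuousOn ρ (Set.Ici (0 : ℝ)))
    {a b : ℝ} (ha : 0 ≤ a) (hb : 0 ≤ b) :
    IntervalIntegrable ρ MeasureTheory.volume a b := by
  apply ContinuousOn.intervalIntegrable
  apply hcont.mono
  intro x hx
  rw [Set.uIcc] at hx
  exact le_trans (le_inf ha hb) hx.1

lemma dick_primderiv (ρ : ℝ → ℝ) (hcont : ContinuousOn ρ (Set.Ici (0 : ℝ)))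
    {v : ℝ} (hv : 0 < v) :
    HasDerivAt (fun x => ∫ t in (0:ℝ)..x, ρ t) (ρ v) v := by
  have hO : ContinuousOn ρ (Set.Ioi (0:ℝ)) := hcont.mono (Set.Ioi_subset_Ici le_rfl)
  have hca : ContinuousAt ρ v := hO.continuousAt (Ioi_mem_nhds hv)
  exact intervalIntegral.integral_hasDerivAt_right
    (dick_intble ρ hcont le_rfl hv.le)
    (hO.stronglyMeasurableAtFilter isOpen_Ioi v hv)
    hca

lemma dick_identity (ρ : ℝ → ℝ) (hcont : ContinuousOn ρ (Set.Ici (0 : ℝ)))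
    (hinit : ∀ u : ℝ, 0 ≤ u → u ≤ 1 → ρ u = 1)
    (hde : ∀ u : ℝ, 1 < u → HasDerivAt ρ (-(ρ (u - 1)) / u) u) :
    ∀ u : ℝ, 1 ≤ u → u * ρ u = ∫ t in (u-1)..u, ρ t := by
  set F : ℝ → ℝ := fun x => ∫ t in (0:ℝ)..x, ρ t with hF
  set G : ℝ → ℝ := fun x => x * ρ x - (F x - F (x-1)) with hG
  have hsplit : ∀ u : ℝ, 1 ≤ u → (∫ t in (u-1)..u, ρ t) = F u - F (u-1) := by
    intro u hu
    have h := intervalIntegral.integral_add_adjacent_intervals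
      (dick_intble ρ hcont le_rfl (by linarith : (0:ℝ) ≤ u - 1))
      (dick_intble ρ hcont (by linarith : (0:ℝ) ≤ u - 1) (by linarith : (0:ℝ) ≤ u))
    simp only [hF]
    linarith [h]
  have hG1 : G 1 = 0 := by
    have h1 : ρ 1 = 1 := hinit 1 zero_le_one le_rfl
    have h2 : F 1 = 1 := by
      have he : F 1 = ∫ t in (0:ℝ)..1, (1:ℝ) := by
        apply intervalIntegral.integral_congr
        intro x hx
        rw [Set.uIcc_of_le zero_le_one] at hx
        exact hinit x hx.1 hx.2
      simp [he]
    have h3 : F 0 = 0 := by simp [hF]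
    simp only [hG]
    norm_num [h1, h2, h3]
  have hGderiv : ∀ x : ℝ, 1 < x → HasDerivAt G 0 x := by
    intro x hx
    have hx0 : (0:ℝ) < x := lt_trans one_pos hx
    have h1 : HasDerivAt (fun y : ℝ => y * ρ y) (1 * ρ x + x * (-(ρ (x-1)) / x)) x :=
      (hasDerivAt_id x).mul (hde x hx)
    have h2 : HasDerivAt F (ρ x) x := dick_primderiv ρ hcont hx0
    have h3 : HasDerivAt (fun y : ℝ => F (y - 1)) (ρ (x-1)) x := by
      have hFx : HasDerivAt F (ρ (x-1)) (x-1) :=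
        dick_primderiv ρ hcont (by linarith)
      have hsub : HasDerivAt (fun y : ℝ => y - 1) 1 x := by
        simpa using (hasDerivAt_id x).sub_const 1
      have hc := HasDerivAt.comp x hFx hsub
      rw [mul_one] at hc
      exact hc
    have h4 := h1.sub (h2.sub h3)
    have heq : 1 * ρ x + x * (-(ρ (x-1)) / x) - (ρ x - ρ (x-1)) = 0 := by
      field_simp; ring
    rw [heq] at h4
    exact h4
  have hGcont : ∀ b : ℝ, 1 ≤ b → ContinuousOn G (Set.Icc 1 b) := by
    intro b hb
    have hFc : ContinuousOn F (Set.uIcc 0 b) := by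
      apply intervalIntegral.continuousOn_primitive_interval
      apply (hcont.mono ?_).integrableOn_compact isCompact_uIcc
      intro x hx
      rw [Set.uIcc_of_le (by linarith : (0:ℝ) ≤ b)] at hx
      exact hx.1
    rw [Set.uIcc_of_le (by linarith : (0:ℝ) ≤ b)] at hFc
    have hsub1 : Set.Icc (1:ℝ) b ⊆ Set.Icc 0 b := Set.Icc_subset_Icc (by norm_num) le_rfl
    have hρc : ContinuousOn ρ (Set.Icc 1 b) :=
      hcont.mono (fun x hx => le_trans zero_le_one hx.1)
    apply ContinuousOn.sub
    · exact (continuousOn_id).mul hρc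
    · apply ContinuousOn.sub (hFc.mono hsub1)
      apply hFc.comp (continuousOn_id.sub continuousOn_const)
      intro x hx
      simp only [Set.mem_Icc]
      constructor <;> simp <;> [linarith [hx.1]; linarith [hx.2]]
  have hGzero : ∀ u : ℝ, 1 ≤ u → G u = 0 := by
    intro u hu
    rcases eq_or_lt_of_le hu with h | h
    · rw [← h]; exact hG1
    · have hconst : ∀ s ∈ Set.Ioc (1:ℝ) u, G u = G s := by
        intro s hs
        have hc : ContinuousOn G (Set.Icc s u) :=
          (hGcont u hu).mono (Set.Icc_subset_Icc hs.1.le le_rfl)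
        have hd : ∀ x ∈ Set.Ico s u, HasDerivWithinAt G 0 (Set.Ici x) x := fun x hx =>
          (hGderiv x (lt_of_lt_of_le hs.1 hx.1)).hasDerivWithinAt
        exact constant_of_has_deriv_right_zero hc hd u (Set.mem_Icc.2 ⟨hs.2, le_rfl⟩)
      have hne : (𝓝[Set.Ioc (1:ℝ) u] 1).NeBot := by
        apply mem_closure_iff_nhdsWithin_neBot.1
        rw [closure_Ioc (ne_of_lt h)]
        exact ⟨le_rfl, hu⟩
      have htend : Tendsto G (𝓝[Set.Ioc (1:ℝ) u] 1) (𝓝 (G 1)) := by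
        have : ContinuousWithinAt G (Set.Icc 1 u) 1 :=
          (hGcont u hu) 1 (Set.mem_Icc.2 ⟨le_rfl, hu⟩)
        exact this.mono Set.Ioc_subset_Icc_self
      have htend2 : Tendsto G (𝓝[Set.Ioc (1:ℝ) u] 1) (𝓝 (G u)) := by
        apply Tendsto.congr' _ tendsto_const_nhds
        filter_upwards [self_mem_nhdsWithin] with s hs
        exact hconst s hs
      rw [tendsto_nhds_unique htend2 htend, hG1]
  intro u hu
  have := hGzero u hu
  simp only [hG] at this
  rw [hsplit u hu]
  simp only [hF] at this ⊢
  linarith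

lemma dick_pos (ρ : ℝ → ℝ) (hcont : ContinuousOn ρ (Set.Ici (0 : ℝ)))
    (hinit : ∀ u : ℝ, 0 ≤ u → u ≤ 1 → ρ u = 1)
    (hiden : ∀ u : ℝ, 1 ≤ u → u * ρ u = ∫ t in (u-1)..u, ρ t) :
    ∀ u : ℝ, 0 ≤ u → 0 < ρ u := by
  by_contra hcon
  push_neg at hcon
  obtain ⟨u₀, hu₀, hρu₀⟩ := hcon
  set S : Set ℝ := {u | 0 ≤ u ∧ ρ u ≤ 0} with hS
  have hne : S.Nonempty := ⟨u₀, hu₀, hρu₀⟩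
  have hbdd : BddBelow S := ⟨0, fun x hx => hx.1⟩
  set s := sInf S with hs
  have hsS : s ∈ S := by
    have hclosed : IsClosed S := by
      have : S = Set.Ici (0:ℝ) ∩ ρ ⁻¹' (Set.Iic 0) := rfl
      rw [this]
      exact ContinuousOn.preimage_isClosed_of_isClosed hcont isClosed_Ici isClosed_Iic
    exact hclosed.csInf_mem hne hbdd
  have hs0 : 0 ≤ s := hsS.1
  have hs1 : 1 < s := by
    by_contra h
    push_neg at h
    have := hinit s hs0 h
    linarith [hsS.2]
  have hposlt : ∀ t : ℝ, 0 ≤ t → t < s → 0 < ρ t := by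
    intro t ht hts
    by_contra h
    push_neg at h
    exact absurd (csInf_le hbdd ⟨ht, h⟩) (not_le.2 hts)
  have hkey := hiden s hs1.le
  have hpos : 0 < ∫ t in (s-1)..s, ρ t := by
    apply intervalIntegral.intervalIntegral_pos_of_pos_on
      (dick_intble ρ hcont (by linarith) (by linarith))
    · intro x hx
      exact hposlt x (by linarith [hx.1]) hx.2
    · linarith
  have : 0 < s * ρ s := hkey ▸ hpos
  nlinarith [hsS.2]

lemma dick_anti (ρ : ℝ → ℝ) (hcont : ContinuousOn ρ (Set.Ici (0 : ℝ)))
    (hinit : ∀ u : ℝ, 0 ≤ u → u ≤ 1 → ρ u = 1)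
    (hde : ∀ u : ℝ, 1 < u → HasDerivAt ρ (-(ρ (u - 1)) / u) u)
    (hpos : ∀ u : ℝ, 0 ≤ u → 0 < ρ u) :
    ∀ x y : ℝ, 0 ≤ x → x ≤ y → ρ y ≤ ρ x := by
  have hanti : AntitoneOn ρ (Set.Ici 1) := by
    apply antitoneOn_of_deriv_nonpos (convex_Ici 1)
      (hcont.mono (fun t ht => Set.mem_Ici.2 (le_trans zero_le_one (Set.mem_Ici.1 ht))))
    · intro x hx
      rw [interior_Ici] at hx
      exact ((hde x hx).differentiableAt).differentiableWithinAt
    · intro x hx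
      rw [interior_Ici] at hx
      rw [(hde x hx).deriv]
      have h1 : 0 < ρ (x - 1) := hpos _ (by simp at hx; linarith)
      have h2 : (0:ℝ) < x := lt_trans one_pos hx
      apply div_nonpos_of_nonpos_of_nonneg <;> linarith
  intro x y hx hxy
  by_cases hy : y ≤ 1
  · rw [hinit x hx (le_trans hxy hy), hinit y (le_trans hx hxy) hy]
  · push_neg at hy
    by_cases hx1 : 1 ≤ x
    · exact hanti hx1 (le_trans hx1 hxy) hxy
    · push_neg at hx1
      rw [hinit x hx hx1.le]
      have := hanti (Set.mem_Ici.2 le_rfl) (Set.mem_Ici.2 hy.le) hy.le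
      rw [hinit 1 zero_le_one le_rfl] at this
      exact this

lemma dick_step (ρ : ℝ → ℝ) (hcont : ContinuousOn ρ (Set.Ici (0 : ℝ)))
    (hiden : ∀ u : ℝ, 1 ≤ u → u * ρ u = ∫ t in (u-1)..u, ρ t)
    (hanti : ∀ x y : ℝ, 0 ≤ x → x ≤ y → ρ y ≤ ρ x) :
    ∀ u : ℝ, 1 ≤ u → u * ρ u ≤ ρ (u - 1) := by
  intro u hu
  rw [hiden u hu]
  calc (∫ t in (u-1)..u, ρ t) ≤ ∫ _t in (u-1)..u, ρ (u-1) := by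
        apply intervalIntegral.integral_mono_on (by linarith)
          (dick_intble ρ hcont (by linarith) (by linarith))
          intervalIntegrable_const
        intro x hx
        exact hanti (u-1) x (by linarith) hx.1
    _ = ρ (u - 1) := by simp

lemma dick_gamma_le_one {u : ℝ} (h0 : 0 ≤ u) (h1 : u ≤ 1) : Real.Gamma (u + 1) ≤ 1 := by
  have hc := Real.convexOn_Gamma
  have h := hc.2 (Set.mem_Ioi.2 one_pos) (Set.mem_Ioi.2 two_pos)
    (by linarith : (0:ℝ) ≤ 1 - u) h0 (by ring : (1 - u) + u = 1)
  have he : (1 - u) • (1:ℝ) + u • (2:ℝ) = u + 1 := by simp [smul_eq_mul]; ring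
  rw [he] at h
  calc Real.Gamma (u+1) ≤ (1-u) • Real.Gamma 1 + u • Real.Gamma 2 := h
    _ = 1 := by
        rw [Real.Gamma_one, Real.Gamma_two]
        simp

theorem stmt_14 (ρ : ℝ → ℝ)
    (hcont : ContinuousOn ρ (Set.Ici (0 : ℝ)))
    (hinit : ∀ u : ℝ, 0 ≤ u → u ≤ 1 → ρ u = 1)
    (hde : ∀ u : ℝ, 1 < u → HasDerivAt ρ (-(ρ (u - 1)) / u) u) :
    ∀ u : ℝ, 0 ≤ u → ρ u ≤ 1 / Real.Gamma (u + 1) := by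
  have hiden := dick_identity ρ hcont hinit hde
  have hpos := dick_pos ρ hcont hinit hiden
  have hanti := dick_anti ρ hcont hinit hde hpos
  have hstep := dick_step ρ hcont hiden hanti
  have main : ∀ n : ℕ, ∀ u : ℝ, 0 ≤ u → u ≤ n + 1 → ρ u ≤ 1 / Real.Gamma (u + 1) := by
    intro n
    induction n with
    | zero =>
        intro u hu0 hu1
        have hu1'' : u ≤ 1 := by push_cast at hu1; linarith
        rw [hinit u hu0 hu1'']
        rw [le_div_iff₀ (Real.Gamma_pos_of_pos (by linarith))]
        simpa using dick_gamma_le_one hu0 hu1''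
    | succ n ih =>
        intro u hu0 hu1
        by_cases h : u ≤ n + 1
        · exact ih u hu0 h
        · push_neg at h
          have hu1' : 1 ≤ u := by
            have : (0:ℝ) ≤ (n:ℝ) := Nat.cast_nonneg n
            linarith
          have h1 := hstep u hu1'
          have h2 : ρ (u - 1) ≤ 1 / Real.Gamma (u - 1 + 1) := by
            apply ih
            · have : (0:ℝ) ≤ (n:ℝ) := Nat.cast_nonneg n
              linarith
            · push_cast at hu1 ⊢
              linarith
          have hu0' : 0 < u := by linarith
          have hΓ : Real.Gamma (u + 1) = u * Real.Gamma u := by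
            rw [Real.Gamma_add_one (ne_of_gt hu0')]
          have hΓpos : 0 < Real.Gamma u := Real.Gamma_pos_of_pos hu0'
          rw [hΓ]
          have hsim : u - 1 + 1 = u := by ring
          rw [hsim] at h2
          rw [le_div_iff₀ (by positivity : (0:ℝ) < u * Real.Gamma u)]
          calc ρ u * (u * Real.Gamma u) = (u * ρ u) * Real.Gamma u := by ring
            _ ≤ ρ (u - 1) * Real.Gamma u := by
                apply mul_le_mul_of_nonneg_right h1 hΓpos.le
            _ ≤ (1 / Real.Gamma u) * Real.Gamma u := by
                apply mul_le_mul_of_nonneg_right h2 hΓpos.le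
            _ = 1 := by field_simp
  intro u hu
  obtain ⟨n, hn⟩ := exists_nat_ge u
  exact main n u hu (by push_cast; linarith)
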